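/- Let v, v' be random vectors in R^p whose coordinate pairs ([v]_ℓ, [v']_ℓ), ℓ = 1,…,p, are i.i.d. centered bivariate Gaussian with Var([v]_ℓ) = Σ_{ww}, Var([v']_ℓ) = Σ_{w'w'}, and Cov([v]_ℓ, [v']_ℓ) = Σ_{ww'}. Then for every a > 0 and d ≥ 2 such that a√(log d / p) < 12√(Σ_{ww}Σ_{w'w'}), P( |⟨v, v'⟩/p − Σ_{ww'}| ≥ a√(log d / p) ) ≤ 4 exp( −a² log d / (4·432·Σ_{ww}Σ_{w'w'}) ). -/

import Mathlib

open MeasureTheory ProbabilityTheory Real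
open scoped NNReal ENNReal

lemma gauss_density (g : ℝ → ℝ) :
    ∫ x, g x ∂(gaussianReal 0 1) = ∫ x, gaussianPDFReal 0 1 x • g x := by
  rw [gaussianReal_of_var_ne_zero _ one_ne_zero]
  have h : (gaussianPDF 0 1) = fun x => ((Real.toNNReal (gaussianPDFReal 0 1 x)) : ℝ≥0∞) := by
    ext x; rfl
  rw [h, integral_withDensity_eq_integral_smul
    ((measurable_gaussianPDFReal 0 1).real_toNNReal) g]
  congr 1 with x
  simp [NNReal.smul_def, Real.coe_toNNReal _ (gaussianPDFReal_nonneg 0 1 x)]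

lemma gauss_integrable_iff (g : ℝ → ℝ) :
    Integrable g (gaussianReal 0 1) ↔
      Integrable (fun x => g x * gaussianPDFReal 0 1 x) volume := by
  rw [gaussianReal_of_var_ne_zero _ one_ne_zero, gaussianPDF_def,
    integrable_withDensity_iff (measurable_gaussianPDFReal 0 1).ennreal_ofReal
      (ae_of_all _ fun _ => ENNReal.ofReal_lt_top)]
  refine integrable_congr (ae_of_all _ fun x => ?_)
  simp only [ENNReal.toReal_ofReal (gaussianPDFReal_nonneg 0 1 x)]

lemma gauss_exp_quad {c b : ℝ} (hc : c < 1/2) :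
    Integrable (fun x => rexp (c*x^2 + b*x)) (gaussianReal 0 1) ∧
    ∫ x, rexp (c*x^2 + b*x) ∂(gaussianReal 0 1)
      = (Real.sqrt (1-2*c))⁻¹ * rexp (b^2/(2*(1-2*c))) := by
  have hB : 0 < 1/2 - c := by linarith
  set B : ℝ := 1/2 - c with hBdef
  set m : ℝ := b/(2*B) with hmdef
  have key : ∀ x : ℝ, rexp (c*x^2 + b*x) * gaussianPDFReal 0 1 x
      = (Real.sqrt (2*π))⁻¹ * rexp (b^2/(4*B)) * rexp (-B*(x - m)^2) := by
    intro x
    rw [gaussianPDFReal]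
    simp only [NNReal.coe_one, mul_one, sub_zero]
    rw [mul_comm, mul_assoc, ← Real.exp_add, mul_assoc, ← Real.exp_add]
    congr 2
    rw [hmdef]
    field_simp
    ring
  have hint0 : Integrable (fun x => rexp (-B*(x - m)^2)) volume :=
    (integrable_exp_neg_mul_sq hB).comp_sub_right m
  have hint : Integrable (fun x => rexp (c*x^2 + b*x)) (gaussianReal 0 1) := by
    rw [gauss_integrable_iff]
    exact (integrable_congr (ae_of_all _ fun x => (key x).symm)).mp
      ((hint0.const_mul _))
  refine ⟨hint, ?_⟩
  rw [gauss_density]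
  have : ∀ x : ℝ, gaussianPDFReal 0 1 x • rexp (c*x^2 + b*x)
      = (Real.sqrt (2*π))⁻¹ * rexp (b^2/(4*B)) * rexp (-B*(x - m)^2) := by
    intro x; rw [smul_eq_mul, mul_comm]; exact key x
  rw [integral_congr_ae (ae_of_all _ this), integral_const_mul,
    integral_sub_right_eq_self (fun x => rexp (-B*x^2)) m, integral_gaussian]
  have h1 : (Real.sqrt (2*π))⁻¹ * rexp (b^2/(4*B)) * Real.sqrt (π/B)
      = ((Real.sqrt (2*π))⁻¹ * Real.sqrt (π/B)) * rexp (b^2/(4*B)) := by ring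
  rw [h1]
  congr 1
  · rw [mul_comm, ← Real.sqrt_inv, ← Real.sqrt_mul (le_of_lt (div_pos pi_pos hB))]
    rw [← Real.sqrt_inv]
    congr 1
    rw [hBdef]
    calc π/(1/2-c) * (2*π)⁻¹ = (π * π⁻¹) * ((1/2-c)⁻¹ * 2⁻¹) := by
          rw [mul_inv, div_eq_mul_inv]; ring
      _ = (1-2*(c:ℝ))⁻¹ := by
          rw [mul_inv_cancel₀ pi_ne_zero, one_mul, ← mul_inv]
          congr 1; ring
  · congr 1
    rw [hBdef]
    ring

lemma q_bound {lam ρ : ℝ} (hlam : |lam| ≤ 1/6) (hρ : |ρ| ≤ 1) :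
    2*lam*ρ + lam^2*(1-ρ^2) ≤ 13/36 := by
  obtain ⟨hl1, hl2⟩ := abs_le.mp hlam
  obtain ⟨hr1, hr2⟩ := abs_le.mp hρ
  nlinarith

lemma sqrt_bound {lam ρ : ℝ} (hlam : |lam| ≤ 1/6) (hρ : |ρ| ≤ 1) :
    (Real.sqrt (1 - (2*lam*ρ + lam^2*(1-ρ^2))))⁻¹ ≤ rexp (lam*ρ + 5*lam^2) := by
  obtain ⟨hl1, hl2⟩ := abs_le.mp hlam
  obtain ⟨hr1, hr2⟩ := abs_le.mp hρ
  have hρsq : ρ^2 ≤ 1 := by nlinarith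
  have htρ1 : -(1:ℝ)/6 ≤ lam*ρ := by nlinarith
  have htρ2 : lam*ρ ≤ (1:ℝ)/6 := by nlinarith
  have hlam2 : lam^2 ≤ 1/36 := by nlinarith
  have hz1 : -(1:ℝ)/3 ≤ 2*lam*ρ + 10*lam^2 := by nlinarith [sq_nonneg lam]
  have h1z : (0:ℝ) < 1 + (2*lam*ρ + 10*lam^2) := by linarith
  have hqz : (2*lam*ρ + lam^2*(1-ρ^2)) * (1+(2*lam*ρ + 10*lam^2)) ≤ 2*lam*ρ + 10*lam^2 := by
    have expand : (2*lam*ρ + lam^2*(1-ρ^2))*(2*lam*ρ + 10*lam^2)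
        = 4*(lam^2*ρ^2) + 22*(lam^2*(lam*ρ))
        - 2*(lam^2*((lam*ρ)*ρ^2)) + 10*(lam^2*lam^2) - 10*((lam^2*lam^2)*ρ^2) := by
      ring
    have hA : lam^2*ρ^2 ≤ lam^2 := by nlinarith [sq_nonneg lam]
    have hB : lam^2*(lam*ρ) ≤ lam^2*(1/6) :=
      mul_le_mul_of_nonneg_left htρ2 (sq_nonneg lam)
    have hCC : (-(1/6) : ℝ) ≤ (lam*ρ)*ρ^2 := by nlinarith [sq_nonneg ρ]
    have hC : lam^2*(-(1/6) : ℝ) ≤ lam^2*((lam*ρ)*ρ^2) :=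
      mul_le_mul_of_nonneg_left hCC (sq_nonneg lam)
    have hE : lam^2*lam^2 ≤ lam^2*(1/36) :=
      mul_le_mul_of_nonneg_left hlam2 (sq_nonneg lam)
    have hF : 0 ≤ (lam^2*lam^2)*ρ^2 := by positivity
    have hG : (0:ℝ) ≤ lam^2*ρ^2 := by positivity
    nlinarith [expand]
  set z : ℝ := 2*lam*ρ + 10*lam^2 with hzdef
  set q : ℝ := 2*lam*ρ + lam^2*(1-ρ^2) with hqdef
  have hzexp : rexp (-z) * (1+z) ≤ 1 := by
    have h := Real.add_one_le_exp z
    calc rexp (-z) * (1+z) ≤ rexp (-z) * rexp z :=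
          mul_le_mul_of_nonneg_left (by linarith) (Real.exp_pos _).le
      _ = 1 := by rw [← Real.exp_add]; simp
  have h1mq : rexp (-z) ≤ 1 - q := by
    have h3 : (1:ℝ) ≤ (1-q)*(1+z) := by
      have hh : (1-q)*(1+z) = 1 + ((2*lam*ρ + 10*lam^2) - q*(1+z)) := by rw [hzdef]; ring
      rw [hh]; linarith
    exact le_of_mul_le_mul_right (by linarith) h1z
  have hsq : rexp (-z/2) ≤ Real.sqrt (1-q) := by
    have hes : rexp (-z) = rexp (-z/2)^2 := by
      rw [sq, ← Real.exp_add]; congr 1; ring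
    have h4 : rexp (-z/2) = Real.sqrt (rexp (-z)) := by
      rw [hes, Real.sqrt_sq (Real.exp_pos _).le]
    rw [h4]
    exact Real.sqrt_le_sqrt h1mq
  calc (Real.sqrt (1-q))⁻¹ ≤ (rexp (-z/2))⁻¹ := inv_anti₀ (Real.exp_pos _) hsq
    _ = rexp (z/2) := by rw [← Real.exp_neg]; congr 1; ring
    _ = rexp (lam*ρ + 5*lam^2) := by congr 1; rw [hzdef]; ring

lemma pair_mgf {lam ρ : ℝ} (hlam : |lam| ≤ 1/6) (hρ : |ρ| ≤ 1) :
    Integrable (fun y : ℝ × ℝ => rexp (lam * (ρ * y.1^2 + Real.sqrt (1-ρ^2) * y.1 * y.2)))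
      ((gaussianReal 0 1).prod (gaussianReal 0 1)) ∧
    ∫ y : ℝ × ℝ, rexp (lam * (ρ * y.1^2 + Real.sqrt (1-ρ^2) * y.1 * y.2))
        ∂((gaussianReal 0 1).prod (gaussianReal 0 1)) ≤ rexp (lam * ρ + 5 * lam^2) := by
  have hρsq : ρ^2 ≤ 1 := by
    obtain ⟨hr1, hr2⟩ := abs_le.mp hρ; nlinarith
  have hβsq : (Real.sqrt (1-ρ^2))^2 = 1 - ρ^2 := Real.sq_sqrt (by linarith)
  set β : ℝ := Real.sqrt (1-ρ^2) with hβdef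
  have hq13 : 2*lam*ρ + lam^2*(1-ρ^2) ≤ 13/36 := q_bound hlam hρ
  have hq2 : (2*lam*ρ + lam^2*(1-ρ^2))/2 < 1/2 := by linarith
  have hinner_eq : ∀ u v : ℝ, rexp (lam * (ρ * u^2 + β * u * v))
      = rexp (lam*ρ*u^2) * rexp ((0:ℝ)*v^2 + (lam*β*u)*v) := by
    intro u v; rw [← Real.exp_add]; ring_nf
  have hinner_int : ∀ u : ℝ, Integrable (fun v => rexp (lam * (ρ * u^2 + β * u * v)))
      (gaussianReal 0 1) := by
    intro u
    refine (integrable_congr (ae_of_all _ fun v => (hinner_eq u v).symm)).mp ?_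
    exact ((gauss_exp_quad (c := 0) (b := lam*β*u) (by norm_num)).1).const_mul _
  have hinner_val : ∀ u : ℝ, ∫ v, rexp (lam * (ρ * u^2 + β * u * v)) ∂(gaussianReal 0 1)
      = rexp (((2*lam*ρ + lam^2*(1-ρ^2))/2) * u^2 + 0 * u) := by
    intro u
    rw [integral_congr_ae (ae_of_all _ fun v => hinner_eq u v), integral_const_mul,
      (gauss_exp_quad (c := 0) (b := lam*β*u) (by norm_num)).2]
    have hs1 : (1:ℝ) - 2*(0:ℝ) = 1 := by norm_num
    rw [hs1, Real.sqrt_one, inv_one, one_mul, ← Real.exp_add]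
    congr 1
    have hb2 : (lam*β*u)^2 = lam^2 * (1-ρ^2) * u^2 := by
      rw [mul_pow, mul_pow, hβsq]
    rw [hb2]
    ring
  have hmeas : AEStronglyMeasurable
      (fun y : ℝ × ℝ => rexp (lam * (ρ * y.1^2 + β * y.1 * y.2)))
      ((gaussianReal 0 1).prod (gaussianReal 0 1)) := by
    apply Measurable.aestronglyMeasurable
    fun_prop
  have houter_int : Integrable
      (fun u => rexp (((2*lam*ρ + lam^2*(1-ρ^2))/2) * u^2 + 0 * u)) (gaussianReal 0 1) :=
    (gauss_exp_quad hq2).1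
  have hint : Integrable (fun y : ℝ × ℝ => rexp (lam * (ρ * y.1^2 + β * y.1 * y.2)))
      ((gaussianReal 0 1).prod (gaussianReal 0 1)) := by
    rw [integrable_prod_iff hmeas]
    refine ⟨ae_of_all _ fun u => hinner_int u, ?_⟩
    refine (integrable_congr (ae_of_all _ fun u => ?_)).mp houter_int
    rw [← hinner_val u]
    rw [integral_congr_ae (ae_of_all _ fun v => ?_)]
    rw [Real.norm_eq_abs, abs_exp]
  refine ⟨hint, ?_⟩
  rw [integral_prod _ hint,
    integral_congr_ae (ae_of_all _ fun u => hinner_val u), (gauss_exp_quad hq2).2]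
  have h2q : 1 - 2*((2*lam*ρ + lam^2*(1-ρ^2))/2) = 1 - (2*lam*ρ + lam^2*(1-ρ^2)) := by ring
  rw [h2q]
  have h0 : ((0:ℝ)^2 / (2 * (1 - (2*lam*ρ + lam^2*(1-ρ^2))))) = 0 := by
    simp
  rw [h0, Real.exp_zero, mul_one]
  exact sqrt_bound hlam hρ

lemma comp_mgf {Ω : Type*} [MeasurableSpace Ω] (P : Measure Ω) [IsProbabilityMeasure P]
    (U V : Ω → ℝ) (hU : Measurable U) (hV : Measurable V)
    (hUV : P.map (fun ω => (U ω, V ω)) = (gaussianReal 0 1).prod (gaussianReal 0 1))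
    {lam ρ : ℝ} (hlam : |lam| ≤ 1/6) (hρ : |ρ| ≤ 1) :
    Integrable (fun ω => rexp (lam * (ρ * (U ω)^2 + Real.sqrt (1-ρ^2) * U ω * V ω))) P ∧
    ∫ ω, rexp (lam * (ρ * (U ω)^2 + Real.sqrt (1-ρ^2) * U ω * V ω)) ∂P
      ≤ rexp (lam*ρ + 5*lam^2) := by
  have hpm : Measurable (fun ω => (U ω, V ω)) := hU.prodMk hV
  have hgm : Measurable (fun y : ℝ × ℝ =>
      rexp (lam * (ρ * y.1^2 + Real.sqrt (1-ρ^2) * y.1 * y.2))) := by fun_prop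
  have h1 := (pair_mgf hlam hρ).1
  have h2 := (pair_mgf hlam hρ).2
  rw [← hUV] at h1 h2
  constructor
  · exact (integrable_map_measure hgm.aestronglyMeasurable hpm.aemeasurable).mp h1
  · rw [integral_map hpm.aemeasurable hgm.aestronglyMeasurable] at h2
    exact h2

lemma pair_iIndep {Ω : Type*} [MeasurableSpace Ω] {P : Measure Ω} [IsProbabilityMeasure P]
    {p : ℕ} (Z : Fin p × Fin 2 → Ω → ℝ) (hmeas : ∀ i, Measurable (Z i))
    (hindep : iIndepFun Z P) :
    iIndepFun
      (fun ℓ ω => (Z (ℓ,0) ω, Z (ℓ,1) ω)) P := by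
  classical
  rw [iIndepFun_iff_iIndep]
  refine iIndepSets.iIndep
    (fun ℓ => ((hmeas (ℓ,0)).prodMk (hmeas (ℓ,1))).comap_le)
    (fun ℓ => Set.preimage (fun ω => (Z (ℓ,0) ω, Z (ℓ,1) ω)) ''
      (Set.image2 (· ×ˢ ·) {s : Set ℝ | MeasurableSet s} {t : Set ℝ | MeasurableSet t}))
    (fun ℓ => isPiSystem_prod.comap _)
    (fun ℓ => ?_) ?_
  · rw [← generateFrom_prod, MeasurableSpace.comap_generateFrom]
  · rw [iIndepSets_iff]
    intro S f hf
    have hf' : ∀ ℓ : Fin p, ∃ A B : Set ℝ, MeasurableSet A ∧ MeasurableSet B ∧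
        (if ℓ ∈ S then f ℓ else Set.univ) = Z (ℓ,0) ⁻¹' A ∩ Z (ℓ,1) ⁻¹' B := by
      intro ℓ
      by_cases hℓ : ℓ ∈ S
      · simp only [hℓ, if_true]
        obtain ⟨r, hr, hrf⟩ := hf ℓ hℓ
        obtain ⟨A, hA, B, hB, hAB⟩ := hr
        refine ⟨A, B, hA, hB, ?_⟩
        rw [← hrf, ← hAB, Set.mk_preimage_prod]
      · exact ⟨Set.univ, Set.univ, .univ, .univ, by rw [if_neg hℓ]; simp⟩
    choose A B hA hB hABeq using hf'
    have hSeq : ∀ ℓ ∈ S, f ℓ = Z (ℓ,0) ⁻¹' (A ℓ) ∩ Z (ℓ,1) ⁻¹' (B ℓ) := by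
      intro ℓ hℓ
      have := hABeq ℓ
      rwa [if_pos hℓ] at this
    set g : Fin p × Fin 2 → Set Ω :=
      fun i => Z i ⁻¹' (if i.2 = 0 then A i.1 else B i.1) with hgdef
    have hsets : ⋂ ℓ ∈ S, f ℓ = ⋂ i ∈ S ×ˢ (Finset.univ : Finset (Fin 2)), g i := by
      ext ω
      simp only [Set.mem_iInter, Finset.mem_product, Finset.mem_univ, and_true]
      constructor
      · rintro h ⟨ℓ, k⟩ hk
        have hh := h ℓ hk
        rw [hSeq ℓ hk] at hh
        fin_cases k
        · simpa [hgdef] using hh.1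
        · simpa [hgdef] using hh.2
      · intro h ℓ hℓ
        rw [hSeq ℓ hℓ]
        exact ⟨by simpa [hgdef] using h (ℓ, 0) hℓ, by simpa [hgdef] using h (ℓ, 1) hℓ⟩
    have hgm : ∀ i : Fin p × Fin 2, i ∈ S ×ˢ (Finset.univ : Finset (Fin 2)) →
        MeasurableSet[MeasurableSpace.comap (Z i) inferInstance] (g i) := by
      rintro i _
      exact ⟨(if i.2 = 0 then A i.1 else B i.1), by split <;> [exact hA i.1; exact hB i.1], rfl⟩
    rw [hsets, hindep.meas_biInter hgm, Finset.prod_product]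
    refine Finset.prod_congr rfl fun ℓ hℓ => ?_
    rw [Fin.prod_univ_two]
    have hind2 : IndepFun (Z (ℓ,0)) (Z (ℓ,1)) P :=
      hindep.indepFun (by simp)
    rw [hSeq ℓ hℓ, hind2.measure_inter_preimage_eq_mul _ _ (hA ℓ) (hB ℓ)]
    simp [hgdef]

lemma chernoff_tail {Ω : Type*} [MeasurableSpace Ω] (P : Measure Ω) [IsProbabilityMeasure P]
    {p : ℕ} (W : Fin p → Ω → ℝ) (hWm : ∀ ℓ, Measurable (W ℓ))
    (hWi : iIndepFun W P)
    {τ : ℝ} (hτ : 0 ≤ τ) (hint : ∀ ℓ, Integrable (fun ω => rexp (τ * W ℓ ω)) P)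
    {K : ℝ} (hK : ∀ ℓ, mgf (W ℓ) P τ ≤ rexp K) (ε' : ℝ) :
    (P {ω | ε' ≤ (∑ ℓ, W ℓ) ω}).toReal ≤ rexp (-τ*ε' + p*K) := by
  have hintsum : Integrable (fun ω => rexp (τ * (∑ ℓ, W ℓ) ω)) P :=
    hWi.integrable_exp_mul_sum hWm (fun ℓ _ => hint ℓ)
  calc (P {ω | ε' ≤ (∑ ℓ, W ℓ) ω}).toReal
      ≤ rexp (-τ*ε') * mgf (∑ ℓ, W ℓ) P τ :=
        measure_ge_le_exp_mul_mgf ε' hτ hintsum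
    _ ≤ rexp (-τ*ε') * rexp K ^ (p:ℕ) := by
        rw [hWi.mgf_sum hWm]
        refine mul_le_mul_of_nonneg_left ?_ (Real.exp_pos _).le
        calc ∏ ℓ : Fin p, mgf (W ℓ) P τ ≤ ∏ _ℓ : Fin p, rexp K :=
              Finset.prod_le_prod (fun ℓ _ => mgf_nonneg) (fun ℓ _ => hK ℓ)
          _ = rexp K ^ (p:ℕ) := by rw [Finset.prod_const, Finset.card_univ, Fintype.card_fin]
    _ = rexp (-τ*ε' + p*K) := by
        rw [← Real.exp_nat_mul, ← Real.exp_add]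

/-- Concentration of `⟨v, v'⟩/p` to the covariance `Σ_{ww'}`.  The coordinate pairs
`([v]ₗ, [v']ₗ)` are i.i.d. centered bivariate Gaussian with variances `Σ_{ww} = s²`,
`Σ_{w'w'} = t²` and covariance `Σ_{ww'} = ρst`, realized as `[v]ₗ = s Z₁ₗ`,
`[v']ₗ = t(ρ Z₁ₗ + √(1−ρ²) Z₂ₗ)` for an i.i.d. array of standard normals.
For `a > 0` and `d ≥ 2` with `a√(log d / p) < 12√(Σ_{ww}Σ_{w'w'})`,
`P(|⟨v,v'⟩/p − Σ_{ww'}| ≥ a√(log d/p)) ≤ 4 exp(−a² log d/(4·432·Σ_{ww}Σ_{w'w'}))`. -/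
theorem stmt7 {Ω : Type*} [MeasurableSpace Ω] (P : Measure Ω) [IsProbabilityMeasure P]
    (p : ℕ) (hp : 0 < p)
    (Z : Fin p × Fin 2 → Ω → ℝ)
    (hmeas : ∀ i, Measurable (Z i))
    (hlaw : ∀ i, Measure.map (Z i) P = gaussianReal 0 1)
    (hindep : iIndepFun Z P)
    (s t ρ : ℝ) (hs : 0 < s) (ht : 0 < t) (hρ : |ρ| ≤ 1)
    (a : ℝ) (ha : 0 < a) (d : ℕ) (hd : 2 ≤ d)
    (hcond : a * Real.sqrt (Real.log d / p) < 12 * Real.sqrt (s ^ 2 * t ^ 2)) :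
    P {ω | a * Real.sqrt (Real.log d / p) ≤
        |(∑ ℓ : Fin p, (s * Z (ℓ, 0) ω) *
            (t * (ρ * Z (ℓ, 0) ω + Real.sqrt (1 - ρ ^ 2) * Z (ℓ, 1) ω))) / p
          - ρ * s * t|}
      ≤ ENNReal.ofReal
          (4 * Real.exp (-(a ^ 2 * Real.log d) / (4 * 432 * (s ^ 2 * t ^ 2)))) := by
  classical
  have hp0 : (0:ℝ) < p := by exact_mod_cast hp
  have hd1 : (1:ℝ) < d := by exact_mod_cast lt_of_lt_of_le one_lt_two hd
  have hlogd : 0 < Real.log d := Real.log_pos hd1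
  have hc : (0:ℝ) < s*t := mul_pos hs ht
  have hsqst : Real.sqrt (s^2*t^2) = s*t := by
    rw [show s^2*t^2 = (s*t)^2 by ring, Real.sqrt_sq hc.le]
  set ε : ℝ := a * Real.sqrt (Real.log d / p) with hεdef
  have hε : 0 < ε := mul_pos ha (Real.sqrt_pos.mpr (div_pos hlogd hp0))
  have hε2 : ε^2 = a^2 * (Real.log d / p) := by
    rw [hεdef, mul_pow, Real.sq_sqrt (div_nonneg hlogd.le hp0.le)]
  have hε12 : ε < 12*(s*t) := by rw [hεdef, ← hsqst]; exact hcond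
  set δ : ℝ := ε / (s*t) with hδdef
  have hδ : 0 < δ := div_pos hε hc
  have hδ12 : δ < 12 := by
    rw [hδdef, div_lt_iff₀ hc]; linarith
  set lam : ℝ := δ / 72 with hlamdef
  have hlam0 : 0 < lam := by rw [hlamdef]; positivity
  have hlam6 : lam < 1/6 := by rw [hlamdef]; linarith
  have hlamabs : |lam| ≤ 1/6 := by rw [abs_of_pos hlam0]; linarith
  set τ : ℝ := lam / (s*t) with hτdef
  have hτ0 : 0 < τ := div_pos hlam0 hc
  have hτc : τ * (s*t) = lam := div_mul_cancel₀ _ hc.ne'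
  have hτcneg : (-τ) * (s*t) = -lam := by rw [neg_mul, hτc]
  have hεcδ : ε = δ*(s*t) := by rw [hδdef]; field_simp
  -- the summands
  set W : Fin p → Ω → ℝ :=
    fun ℓ ω => (s*t) * (ρ * (Z (ℓ,0) ω)^2 + Real.sqrt (1-ρ^2) * Z (ℓ,0) ω * Z (ℓ,1) ω)
    with hWdef
  have hWm : ∀ ℓ, Measurable (W ℓ) := by
    intro ℓ; rw [hWdef]
    have h0 := hmeas (ℓ,0); have h1 := hmeas (ℓ,1)
    fun_prop
  have hWi : iIndepFun W P := by
    have h := (pair_iIndep Z hmeas hindep).comp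
      (fun ℓ => fun y : ℝ × ℝ => (s*t) * (ρ * y.1^2 + Real.sqrt (1-ρ^2) * y.1 * y.2))
      (fun ℓ => by fun_prop)
    exact h
  have hUV : ∀ ℓ : Fin p, P.map (fun ω => (Z (ℓ,0) ω, Z (ℓ,1) ω))
      = (gaussianReal 0 1).prod (gaussianReal 0 1) := by
    intro ℓ
    have hIF : IndepFun (Z (ℓ,0)) (Z (ℓ,1)) P := hindep.indepFun (by simp)
    rw [(indepFun_iff_map_prod_eq_prod_map_map (hmeas _).aemeasurable
      (hmeas _).aemeasurable).mp hIF, hlaw, hlaw]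
  have key : ∀ (τ' : ℝ), |τ' * (s*t)| ≤ 1/6 → ∀ ℓ : Fin p,
      Integrable (fun ω => rexp (τ' * W ℓ ω)) P ∧
      mgf (W ℓ) P τ' ≤ rexp ((τ'*(s*t))*ρ + 5*(τ'*(s*t))^2) := by
    intro τ' hτ' ℓ
    have hcm := comp_mgf P (Z (ℓ,0)) (Z (ℓ,1)) (hmeas _) (hmeas _) (hUV ℓ) hτ' hρ
    have heq : ∀ ω, rexp (τ' * W ℓ ω)
        = rexp ((τ'*(s*t)) * (ρ * (Z (ℓ,0) ω)^2
            + Real.sqrt (1-ρ^2) * Z (ℓ,0) ω * Z (ℓ,1) ω)) := by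
      intro ω; rw [hWdef]; congr 1; ring
    constructor
    · exact (integrable_congr (ae_of_all _ heq)).mpr hcm.1
    · rw [mgf]
      calc (∫ ω, rexp (τ' * W ℓ ω) ∂P)
          = ∫ ω, rexp ((τ'*(s*t)) * (ρ * (Z (ℓ,0) ω)^2
              + Real.sqrt (1-ρ^2) * Z (ℓ,0) ω * Z (ℓ,1) ω)) ∂P :=
            integral_congr_ae (ae_of_all _ heq)
        _ ≤ _ := hcm.2
  have habsneg : |(-τ) * (s*t)| ≤ 1/6 := by
    rw [hτcneg, abs_neg]; exact hlamabs
  have habspos : |τ * (s*t)| ≤ 1/6 := by rw [hτc]; exact hlamabs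
  -- tail sets
  set T : ℝ := -(a ^ 2 * Real.log d) / (4 * 432 * (s ^ 2 * t ^ 2)) with hTdef
  have hpδ2 : (p:ℝ)*δ^2 = a^2*Real.log d/(s^2*t^2) := by
    rw [hδdef]
    rw [div_pow, hε2]
    field_simp
  have hfinal : (p:ℝ)*(-(lam*δ)+5*lam^2) ≤ T := by
    have h1 : (p:ℝ)*(-(lam*δ)+5*lam^2) = -(67/5184)*((p:ℝ)*δ^2) := by
      rw [hlamdef]; ring
    have h2 : T = -(3/5184)*((p:ℝ)*δ^2) := by
      rw [hTdef, hpδ2]; ring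
    have hQ : 0 ≤ (p:ℝ)*δ^2 := by positivity
    rw [h1, h2]; linarith
  -- upper tail
  have hup : (P {ω | (p:ℝ)*(ρ*(s*t)) + (p:ℝ)*ε ≤ (∑ ℓ, W ℓ) ω}).toReal ≤ rexp T := by
    have h := chernoff_tail P W hWm hWi hτ0.le
      (fun ℓ => (key τ habspos ℓ).1) (fun ℓ => (key τ habspos ℓ).2)
      ((p:ℝ)*(ρ*(s*t)) + (p:ℝ)*ε)
    refine h.trans ?_
    rw [Real.exp_le_exp]
    have hE : -τ*((p:ℝ)*(ρ*(s*t))+(p:ℝ)*ε) + (p:ℝ)*((τ*(s*t))*ρ + 5*(τ*(s*t))^2)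
        = (p:ℝ)*(-(lam*δ)+5*lam^2) := by
      rw [hτc, hεcδ, hτdef]
      field_simp
      ring
    rw [hE]; exact hfinal
  -- lower tail
  have hlosets : {ω | (∑ ℓ, W ℓ) ω ≤ (p:ℝ)*(ρ*(s*t)) - (p:ℝ)*ε}
      = {ω | (p:ℝ)*ε - (p:ℝ)*(ρ*(s*t)) ≤ (∑ ℓ, (fun ℓ' => -(W ℓ')) ℓ) ω} := by
    ext ω
    simp only [Set.mem_setOf_eq, Finset.sum_apply, Pi.neg_apply, Finset.sum_neg_distrib]
    constructor <;> intro h <;> linarith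
  have hlo : (P {ω | (∑ ℓ, W ℓ) ω ≤ (p:ℝ)*(ρ*(s*t)) - (p:ℝ)*ε}).toReal ≤ rexp T := by
    rw [hlosets]
    have hWm' : ∀ ℓ, Measurable (fun ω => -(W ℓ ω)) := fun ℓ => (hWm ℓ).neg
    have hWi' : iIndepFun (fun ℓ' => -(W ℓ')) P := by
      have h := hWi.comp (fun ℓ => (fun x : ℝ => -x)) (fun ℓ => measurable_neg)
      exact h
    have hint' : ∀ ℓ, Integrable (fun ω => rexp (τ * (-(W ℓ)) ω)) P := by
      intro ℓ
      have := (key (-τ) habsneg ℓ).1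
      refine (integrable_congr (ae_of_all _ fun ω => ?_)).mpr this
      simp only [Pi.neg_apply]; congr 1; ring
    have hK' : ∀ ℓ, mgf (-(W ℓ)) P τ ≤ rexp (((-τ)*(s*t))*ρ + 5*((-τ)*(s*t))^2) := by
      intro ℓ
      rw [mgf_neg]
      exact (key (-τ) habsneg ℓ).2
    have h := chernoff_tail P (fun ℓ' => -(W ℓ')) (fun ℓ => hWm' ℓ) hWi' hτ0.le
      hint' hK' ((p:ℝ)*ε - (p:ℝ)*(ρ*(s*t)))
    refine h.trans ?_
    rw [Real.exp_le_exp]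
    have hE : -τ*((p:ℝ)*ε-(p:ℝ)*(ρ*(s*t))) + (p:ℝ)*(((-τ)*(s*t))*ρ + 5*((-τ)*(s*t))^2)
        = (p:ℝ)*(-(lam*δ)+5*lam^2) := by
      rw [hτcneg, hεcδ, hτdef]
      field_simp
      ring
    rw [hE]; exact hfinal
  -- put together
  have hsum_eq : ∀ ω, (∑ ℓ : Fin p, (s * Z (ℓ, 0) ω) *
      (t * (ρ * Z (ℓ, 0) ω + Real.sqrt (1 - ρ ^ 2) * Z (ℓ, 1) ω)))
      = (∑ ℓ, W ℓ) ω := by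
    intro ω
    rw [Finset.sum_apply]
    refine Finset.sum_congr rfl fun ℓ _ => ?_
    rw [hWdef]; ring
  have hsub : {ω | ε ≤ |(∑ ℓ : Fin p, (s * Z (ℓ, 0) ω) *
          (t * (ρ * Z (ℓ, 0) ω + Real.sqrt (1 - ρ ^ 2) * Z (ℓ, 1) ω))) / p - ρ * s * t|}
      ⊆ {ω | (p:ℝ)*(ρ*(s*t)) + (p:ℝ)*ε ≤ (∑ ℓ, W ℓ) ω}
        ∪ {ω | (∑ ℓ, W ℓ) ω ≤ (p:ℝ)*(ρ*(s*t)) - (p:ℝ)*ε} := by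
    intro ω hω
    simp only [Set.mem_setOf_eq, Set.mem_union] at hω ⊢
    rw [hsum_eq ω] at hω
    rcases le_abs.mp hω with h | h
    · left
      have h3 : (ε + ρ*s*t) ≤ (∑ ℓ, W ℓ) ω / p := by linarith
      rw [le_div_iff₀ hp0] at h3
      have h4 : (ε + ρ*s*t)*p = (p:ℝ)*(ρ*(s*t)) + (p:ℝ)*ε := by ring
      linarith
    · right
      have h3 : (∑ ℓ, W ℓ) ω / p ≤ ρ*s*t - ε := by linarith
      rw [div_le_iff₀ hp0] at h3
      have h4 : (ρ*s*t - ε)*p = (p:ℝ)*(ρ*(s*t)) - (p:ℝ)*ε := by ring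
      linarith
  calc P {ω | ε ≤ |(∑ ℓ : Fin p, (s * Z (ℓ, 0) ω) *
          (t * (ρ * Z (ℓ, 0) ω + Real.sqrt (1 - ρ ^ 2) * Z (ℓ, 1) ω))) / p - ρ * s * t|}
      ≤ P ({ω | (p:ℝ)*(ρ*(s*t)) + (p:ℝ)*ε ≤ (∑ ℓ, W ℓ) ω}
        ∪ {ω | (∑ ℓ, W ℓ) ω ≤ (p:ℝ)*(ρ*(s*t)) - (p:ℝ)*ε}) := measure_mono hsub
    _ ≤ P {ω | (p:ℝ)*(ρ*(s*t)) + (p:ℝ)*ε ≤ (∑ ℓ, W ℓ) ω}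
        + P {ω | (∑ ℓ, W ℓ) ω ≤ (p:ℝ)*(ρ*(s*t)) - (p:ℝ)*ε} := measure_union_le _ _
    _ ≤ ENNReal.ofReal (rexp T) + ENNReal.ofReal (rexp T) := by
        gcongr
        · rw [← ENNReal.ofReal_toReal (measure_ne_top P _)]
          exact ENNReal.ofReal_le_ofReal hup
        · rw [← ENNReal.ofReal_toReal (measure_ne_top P _)]
          exact ENNReal.ofReal_le_ofReal hlo
    _ ≤ ENNReal.ofReal (4 * rexp T) := by
        rw [← ENNReal.ofReal_add (Real.exp_pos _).le (Real.exp_pos _).le]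
        refine ENNReal.ofReal_le_ofReal ?_
        have := Real.exp_pos T
        linarith
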